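/- Let μ be an atomless Borel probability measure on Cantor space with μ([σ]) > 0 for every string σ. Then there exists a monotone map φ on finite strings inducing an order-preserving homeomorphism Φ : 2^ω → 2^ω. In particular, for every such μ there is a homeomorphism Φ of 2^ω such that the pushforward of μ under Φ is a measure λ with |λ([τ]) − 2^{-|τ|}| ≤ 2^{-|τ|} for all strings τ. -/

import Mathlib

open MeasureTheory ENNReal

abbrev Cantor : Type := ℕ → Bool

def cyl (σ : List Bool) : Set Cantor := {x | ∀ i, i < σ.length → x i = σ.getD i false}

def seg (x : Cantor) (n : ℕ) : List Bool := List.ofFn (fun i : Fin n => x i)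

namespace C15
set_option linter.unusedSectionVars false
attribute [local instance] Classical.propDecidable

/-- big-endian valuation of the first `d` bits -/
def val : ℕ → Cantor → ℕ
  | 0, _ => 0
  | d+1, x => 2 * val d x + (if x d then 1 else 0)

lemma val_lt (d : ℕ) (x : Cantor) : val d x < 2^d := by
  induction d with
  | zero => simp [val]
  | succ d ih =>
    simp only [val, pow_succ]
    rcases Bool.dichotomy (x d) with h | h <;> simp [h] <;> omega

lemma val_lower (d e : ℕ) (x : Cantor) : 2^e * val d x ≤ val (d+e) x := by
  induction e with
  | zero => simp
  | succ e ih =>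
    have : d + (e+1) = (d+e)+1 := by omega
    rw [this]
    simp only [val, pow_succ]
    rcases Bool.dichotomy (x (d+e)) with h | h <;> simp [h] <;> nlinarith [ih]

lemma val_upper (d e : ℕ) (x : Cantor) : val (d+e) x < 2^e * (val d x + 1) := by
  induction e with
  | zero => simp
  | succ e ih =>
    have : d + (e+1) = (d+e)+1 := by omega
    rw [this]
    simp only [val, pow_succ]
    rcases Bool.dichotomy (x (d+e)) with h | h <;> simp [h] <;> nlinarith [ih]

lemma val_congr {d : ℕ} {x y : Cantor} (h : ∀ i, i < d → x i = y i) :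
    val d x = val d y := by
  induction d with
  | zero => rfl
  | succ d ih =>
    simp only [val]
    rw [ih (fun i hi => h i (by omega)), h d (by omega)]

lemma eq_of_val_eq {x y : Cantor} (h : ∀ d, val d x = val d y) : x = y := by
  funext i
  have h1 := h (i+1)
  have h0 := h i
  simp only [val] at h1
  rcases Bool.dichotomy (x i) with hx | hx <;> rcases Bool.dichotomy (y i) with hy | hy <;>
    simp [hx, hy] at h1 ⊢ <;> omega

/-- if two points agree at first `d+e` digits-valuation, they agree at depth `d` -/
lemma val_eq_of_val_eq_add {d e : ℕ} {x y : Cantor} (h : val (d+e) x = val (d+e) y) :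
    val d x = val d y := by
  have l1 := val_lower d e x
  have l2 := val_upper d e x
  have l3 := val_lower d e y
  have l4 := val_upper d e y
  nlinarith [pow_pos (by norm_num : (0:ℕ) < 2) e]

lemma val_allfalse {d e : ℕ} {x : Cantor} (h : ∀ j, d ≤ j → j < d + e → x j = false) :
    val (d+e) x = 2^e * val d x := by
  induction e with
  | zero => simp
  | succ e ih =>
    have hde : d + (e+1) = (d+e)+1 := by omega
    rw [hde]
    simp only [val]
    rw [ih (fun j h1 h2 => h j h1 (by omega)), h (d+e) (by omega) (by omega)]
    simp; ring

lemma val_alltrue {d e : ℕ} {x : Cantor} (h : ∀ j, d ≤ j → j < d + e → x j = true) :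
    val (d+e) x = 2^e * (val d x + 1) - 1 := by
  induction e with
  | zero => simp
  | succ e ih =>
    have hde : d + (e+1) = (d+e)+1 := by omega
    rw [hde]
    simp only [val]
    rw [ih (fun j h1 h2 => h j h1 (by omega)), h (d+e) (by omega) (by omega)]
    have h1 : 1 ≤ 2^e * (val d x + 1) := Nat.one_le_iff_ne_zero.2 (by positivity)
    have h2 : 2^e*2*(val d x+1) = 2*(2^e*(val d x+1)) := by ring
    rw [pow_succ]
    simp only [if_pos]
    omega

lemma exists_val_eq (d a : ℕ) (ha : a < 2^d) : ∃ x : Cantor, val d x = a := by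
  induction d generalizing a with
  | zero => exact ⟨fun _ => false, by simpa using (by omega : a = 0).symm ▸ rfl⟩
  | succ d ih =>
    obtain ⟨y, hy⟩ := ih (a/2) (by rw [pow_succ] at ha; omega)
    refine ⟨fun i => if i < d then y i else (if i = d then decide (a % 2 = 1) else false), ?_⟩
    simp only [val]
    have h1 : val d (fun i => if i < d then y i else (if i = d then decide (a % 2 = 1) else false))
        = val d y := val_congr (fun i hi => by simp [hi])
    rw [h1, hy]
    by_cases h : a % 2 = 1 <;> simp [h] <;> omega

/-- numeric cylinder interval -/
def nset (d a b : ℕ) : Set Cantor := {x | a ≤ val d x ∧ val d x < b}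

lemma nset_refine (d a b e : ℕ) : nset d a b = nset (d+e) (a*2^e) (b*2^e) := by
  ext x
  have l1 := val_lower d e x
  have l2 := val_upper d e x
  have hp : (0:ℕ) < 2^e := pow_pos (by norm_num) e
  constructor
  · rintro ⟨h1, h2⟩
    constructor
    · calc a * 2^e ≤ val d x * 2^e := by exact Nat.mul_le_mul_right _ h1
        _ = 2^e * val d x := by ring
        _ ≤ _ := l1
    · calc val (d+e) x < 2^e * (val d x + 1) := l2
        _ ≤ 2^e * b := by exact Nat.mul_le_mul_left _ (by omega)
        _ = b * 2^e := by ring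
  · rintro ⟨h1, h2⟩
    constructor
    · by_contra hc
      push_neg at hc
      have : val (d+e) x < 2^e * a := lt_of_lt_of_le l2 (Nat.mul_le_mul_left _ (by omega))
      nlinarith
    · by_contra hc
      push_neg at hc
      have : b * 2^e ≤ val (d+e) x := by
        calc b * 2^e ≤ val d x * 2^e := Nat.mul_le_mul_right _ hc
          _ = 2^e * val d x := by ring
          _ ≤ _ := l1
      omega

lemma nset_union {d a j b : ℕ} (h1 : a ≤ j) (h2 : j ≤ b) :
    nset d a b = nset d a j ∪ nset d j b := by
  ext x; simp only [nset, Set.mem_union, Set.mem_setOf_eq]; omega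

lemma nset_disjoint {d a j b : ℕ} : Disjoint (nset d a j) (nset d j b) := by
  rw [Set.disjoint_left]
  rintro x ⟨_, h1⟩ ⟨h2, _⟩; omega

lemma nset_subset {d a b a' b' : ℕ} (h1 : a ≤ a') (h2 : b' ≤ b) :
    nset d a' b' ⊆ nset d a b := by
  rintro x ⟨u, v⟩; exact ⟨by omega, by omega⟩

lemma nset_nonempty {d a b : ℕ} (h1 : a < b) (h2 : b ≤ 2^d) :
    (nset d a b).Nonempty := by
  obtain ⟨x, hx⟩ := exists_val_eq d a (by omega)
  exact ⟨x, by simp [nset, hx]; omega⟩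

lemma measurable_val (d : ℕ) : Measurable (val d) := by
  induction d with
  | zero => exact measurable_const
  | succ d ih =>
    have h2 : Measurable (fun x : Cantor => if x d then 1 else 0) := by
      have : (fun x : Cantor => if x d then 1 else 0)
          = (fun b : Bool => if b then 1 else 0) ∘ (fun x : Cantor => x d) := rfl
      rw [this]
      exact (measurable_from_top).comp (measurable_pi_apply d)
    exact (ih.const_mul 2).add h2

lemma continuous_val (d : ℕ) : Continuous (val d) := by
  induction d with
  | zero => exact continuous_const
  | succ d ih =>
    have h2 : Continuous (fun x : Cantor => if x d then 1 else 0) := by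
      have : (fun x : Cantor => if x d then 1 else 0)
          = (fun b : Bool => if b then 1 else 0) ∘ (fun x : Cantor => x d) := rfl
      rw [this]
      exact (continuous_of_discreteTopology).comp (continuous_apply d)
    exact ((ih.const_smul 2).add h2 : )

lemma nset_eq_preimage (d a b : ℕ) : nset d a b = val d ⁻¹' (Set.Ico a b) := rfl

lemma measurableSet_nset (d a b : ℕ) : MeasurableSet (nset d a b) :=
  (measurable_val d) measurableSet_Ico

lemma isOpen_nset (d a b : ℕ) : IsOpen (nset d a b) := by
  rw [nset_eq_preimage]; exact (isOpen_discrete _).preimage (continuous_val d)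

lemma isClosed_nset (d a b : ℕ) : IsClosed (nset d a b) := by
  rw [nset_eq_preimage]; exact (isClosed_discrete _).preimage (continuous_val d)

lemma nset_univ : nset 0 0 1 = Set.univ := by
  ext x; simp [nset, val]


/-! ### constants -/

noncomputable def Bc (n : ℕ) : ℝ := (1 - (4:ℝ)⁻¹^(n+1)) * (2 * 2⁻¹^n)
noncomputable def Kc (n : ℕ) : ℝ := Bc (n+1)
noncomputable def dlc (n : ℕ) : ℝ := (4:ℝ)⁻¹^(n+2) * 2⁻¹^n

lemma dlc_pos (n : ℕ) : 0 < dlc n := by unfold dlc; positivity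

lemma Kc_eq (n : ℕ) : Kc n = (1 - (4:ℝ)⁻¹^(n+2)) * 2⁻¹^n := by
  simp only [Kc, Bc, pow_succ]; ring

lemma quarter_le (n : ℕ) : (4:ℝ)⁻¹^(n+2) ≤ 2⁻¹ := by
  calc (4:ℝ)⁻¹^(n+2) ≤ 4⁻¹^1 := by
        apply pow_le_pow_of_le_one (by norm_num) (by norm_num) (by omega)
    _ ≤ 2⁻¹ := by norm_num

lemma dlc_le_Kc (n : ℕ) : dlc n ≤ Kc n := by
  rw [Kc_eq, dlc]
  have h := quarter_le n
  have h2 : (0:ℝ) < 2⁻¹^n := by positivity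
  nlinarith

lemma two_Kc_sub_Bc (n : ℕ) : 2 * Kc n - Bc n = 6 * dlc n := by
  simp only [Kc, Bc, dlc, pow_succ]; ring

lemma Bc_lt_two_Kc (n : ℕ) : Bc n < 2 * Kc n := by
  have := two_Kc_sub_Bc n; have := dlc_pos n; linarith

lemma Bc_le (n : ℕ) : Bc n ≤ 2 * 2⁻¹^n := by
  have h2 : (0:ℝ) < 2⁻¹^n := by positivity
  have h3 : (0:ℝ) ≤ (4:ℝ)⁻¹^(n+1) := by positivity
  simp only [Bc]; nlinarith

lemma one_le_Bc0 : 1 ≤ Bc 0 := by norm_num [Bc]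

lemma two_pow_halfpow (n : ℕ) : (2:ℝ)^n * 2⁻¹^n = 1 := by
  rw [← mul_pow]; norm_num

/-! ### real-valued measure -/

variable (μ : Measure Cantor) [IsProbabilityMeasure μ]

noncomputable def ms (S : Set Cantor) : ℝ := (μ S).toReal

lemma ms_nonneg (S : Set Cantor) : 0 ≤ ms μ S := ENNReal.toReal_nonneg

lemma ms_mono {S T : Set Cantor} (h : S ⊆ T) : ms μ S ≤ ms μ T :=
  ENNReal.toReal_mono (measure_ne_top μ T) (measure_mono h)

lemma ms_univ : ms μ Set.univ = 1 := by simp [ms]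

lemma ms_add {d a j b : ℕ} (h1 : a ≤ j) (h2 : j ≤ b) :
    ms μ (nset d a b) = ms μ (nset d a j) + ms μ (nset d j b) := by
  simp only [ms]
  rw [nset_union h1 h2, measure_union nset_disjoint (measurableSet_nset d j b),
    ENNReal.toReal_add (measure_ne_top μ _) (measure_ne_top μ _)]

/-! ### fineness -/

lemma piece_antitone {D e t : ℕ} {x : Cantor} (hx : x ∈ nset (D+e) t (t+1)) :
    nset (D+e) t (t+1) ⊆ nset D (val D x) (val D x + 1) := by
  rintro y ⟨h1, h2⟩
  obtain ⟨h3, h4⟩ := hx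
  have : val (D+e) y = val (D+e) x := by omega
  have h5 := val_eq_of_val_eq_add this
  exact ⟨le_of_eq h5.symm, by omega⟩

lemma fine (hc : ∀ y : Cantor, μ {y} = 0) {ε : ℝ} (hε : 0 < ε) :
    ∃ D : ℕ, ∀ e t, ms μ (nset (D+e) t (t+1)) ≤ ε := by
  classical
  set S : ℕ → Cantor → Set Cantor := fun d x => nset d (val d x) (val d x + 1) with hS
  have hanti : ∀ x : Cantor, Antitone (fun d => S d x) := by
    intro x d e hde
    obtain ⟨k, rfl⟩ := Nat.exists_eq_add_of_le hde
    intro y hy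
    exact piece_antitone (by exact ⟨le_refl _, by omega⟩) hy
  have hiInter : ∀ x : Cantor, (⋂ d, S d x) = {x} := by
    intro x
    ext y
    simp only [Set.mem_iInter, Set.mem_singleton_iff, hS, nset, Set.mem_setOf_eq]
    constructor
    · intro h
      exact (eq_of_val_eq (fun d => by have := h d; omega))
    · rintro rfl d; omega
  have key : ∀ x : Cantor, ∃ d, μ (S d x) < ENNReal.ofReal ε := by
    intro x
    have htend : Filter.Tendsto (fun d => μ (S d x)) Filter.atTop (nhds (μ (⋂ d, S d x))) := by
      have := MeasureTheory.tendsto_measure_iInter_atTop (μ := μ) (s := fun d => S d x)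
        (fun d => (measurableSet_nset _ _ _).nullMeasurableSet) (hanti x) ⟨0, measure_ne_top μ _⟩
      exact this
    rw [hiInter x, hc x] at htend
    have := htend.eventually_lt_const (by simpa using hε : (0:ℝ≥0∞) < ENNReal.ofReal ε)
    exact this.exists
  choose dd hdd using key
  obtain ⟨t, ht⟩ := IsCompact.elim_finite_subcover (isCompact_univ (X := Cantor))
    (fun x => S (dd x) x) (fun x => isOpen_nset _ _ _)
    (fun x _ => Set.mem_iUnion.2 ⟨x, ⟨le_refl _, by omega⟩⟩)
  refine ⟨t.sup dd, fun e k => ?_⟩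
  by_cases hne : (nset (t.sup dd + e) k (k+1)).Nonempty
  · obtain ⟨y, hy⟩ := hne
    obtain ⟨x, hxt, hyx⟩ := Set.mem_iUnion₂.1 (ht (Set.mem_univ y))
    have hdx : dd x ≤ t.sup dd + e := le_trans (Finset.le_sup hxt) (by omega)
    obtain ⟨k2, hk2⟩ := Nat.exists_eq_add_of_le hdx
    -- nset (t.sup dd + e) k (k+1) ⊆ S (dd x) y = S (dd x) x
    have hsub : nset (t.sup dd + e) k (k+1) ⊆ S (dd x) x := by
      have h1 : nset (t.sup dd + e) k (k+1) ⊆ S (dd x) y := by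
        rw [hk2] at hy ⊢
        exact piece_antitone hy
      have h2 : S (dd x) y = S (dd x) x := by
        have : val (dd x) y = val (dd x) x := by
          obtain ⟨u, v⟩ := hyx; omega
        simp [hS, this]
      rwa [h2] at h1
    have := measure_mono (μ := μ) hsub
    have hlt : μ (nset (t.sup dd + e) k (k+1)) ≤ ENNReal.ofReal ε := le_trans this (le_of_lt (hdd x))
    calc ms μ _ ≤ (ENNReal.ofReal ε).toReal := ENNReal.toReal_mono ENNReal.ofReal_ne_top hlt
      _ = ε := ENNReal.toReal_ofReal (le_of_lt hε)
  · rw [Set.not_nonempty_iff_eq_empty] at hne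
    rw [ms, hne]
    simp [le_of_lt hε]


/-! ### parts, priority points, splitting -/

structure Pc where
  d : ℕ
  a : ℕ
  b : ℕ

def pset (P : Pc) : Set Cantor := nset P.d P.a P.b

/-- `p = (c,k)` represents the dyadic rational `c/2^k`; strict interiority in `P`. -/
def Qin (p : ℕ × ℕ) (P : Pc) : Prop :=
  P.a * 2^p.2 < p.1 * 2^P.d ∧ p.1 * 2^P.d < P.b * 2^p.2

noncomputable def enm : ℕ → ℕ × ℕ := Denumerable.ofNat (ℕ × ℕ)

lemma enm_surj : Function.Surjective enm := fun p => ⟨Encodable.encode p, Denumerable.ofNat_encode p⟩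

lemma Qin_exists {P : Pc} (h : P.a < P.b) : ∃ m, Qin (enm m) P := by
  obtain ⟨m, hm⟩ := enm_surj (2*P.a+1, P.d+1)
  refine ⟨m, ?_⟩
  rw [hm]
  have h2 : (0:ℕ) < 2^P.d := pow_pos (by norm_num) _
  constructor
  · show P.a * 2^(P.d+1) < (2*P.a+1) * 2^P.d
    rw [pow_succ]; nlinarith
  · show (2*P.a+1) * 2^P.d < P.b * 2^(P.d+1)
    rw [pow_succ]; nlinarith

open Classical in
noncomputable def prio (P : Pc) : ℕ × ℕ :=
  if h : ∃ m, Qin (enm m) P then enm (Nat.find h) else (0,0)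

lemma prio_Qin {P : Pc} (h : P.a < P.b) : Qin (prio P) P := by
  rw [prio, dif_pos (Qin_exists h)]
  exact Nat.find_spec (Qin_exists h)

open Classical in
lemma prio_eq {P : Pc} {m0 : ℕ} (h0 : Qin (enm m0) P) (hmin : ∀ m, m < m0 → ¬ Qin (enm m) P) :
    prio P = enm m0 := by
  have hex : ∃ m, Qin (enm m) P := ⟨m0, h0⟩
  rw [prio, dif_pos hex]
  congr 1
  have h1 : Nat.find hex ≤ m0 := Nat.find_le h0
  rcases lt_or_eq_of_le h1 with h | h
  · exact absurd (Nat.find_spec hex) (hmin _ h)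
  · exact h

/-- cancel a common factor `2^e`, strict -/
lemma cancel_pow_lt {u v e : ℕ} (h : u * 2^e < v * 2^e) : u < v :=
  Nat.lt_of_mul_lt_mul_right h

lemma mul_pow_lt {u v e : ℕ} (h : u < v) : u * 2^e < v * 2^e :=
  (Nat.mul_lt_mul_right (pow_pos (by norm_num) e)).2 h

/-- key exponent juggling: `(c * 2^(d+e-k)) * 2^k = (c * 2^d) * 2^e` for `k ≤ d+e`. -/
lemma zpos_mul (c k d e : ℕ) (hk : k ≤ d + e) :
    (c * 2^(d+e-k)) * 2^k = (c * 2^d) * 2^e := by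
  rw [mul_assoc, pow_sub_mul_pow _ hk, pow_add]; ring

lemma Qin_anti_left {p : ℕ × ℕ} {P : Pc} {e j : ℕ} (hj : j ≤ P.b * 2^e)
    (h : Qin p ⟨P.d + e, P.a * 2^e, j⟩) : Qin p P := by
  obtain ⟨h1, h2⟩ := h
  dsimp at h1 h2
  constructor
  · apply cancel_pow_lt (e := e)
    calc P.a * 2^p.2 * 2^e = P.a * 2^e * 2^p.2 := by ring
      _ < p.1 * 2^(P.d+e) := h1
      _ = p.1 * 2^P.d * 2^e := by rw [pow_add]; ring
  · apply cancel_pow_lt (e := e)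
    calc p.1 * 2^P.d * 2^e = p.1 * 2^(P.d+e) := by rw [pow_add]; ring
      _ < j * 2^p.2 := h2
      _ ≤ P.b * 2^e * 2^p.2 := Nat.mul_le_mul_right _ hj
      _ = P.b * 2^p.2 * 2^e := by ring

lemma Qin_anti_right {p : ℕ × ℕ} {P : Pc} {e j : ℕ} (hj : P.a * 2^e ≤ j)
    (h : Qin p ⟨P.d + e, j, P.b * 2^e⟩) : Qin p P := by
  obtain ⟨h1, h2⟩ := h
  dsimp at h1 h2
  constructor
  · apply cancel_pow_lt (e := e)
    calc P.a * 2^p.2 * 2^e = P.a * 2^e * 2^p.2 := by ring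
      _ ≤ j * 2^p.2 := Nat.mul_le_mul_right _ hj
      _ < p.1 * 2^(P.d+e) := h1
      _ = p.1 * 2^P.d * 2^e := by rw [pow_add]; ring
  · apply cancel_pow_lt (e := e)
    calc p.1 * 2^P.d * 2^e = p.1 * 2^(P.d+e) := by rw [pow_add]; ring
      _ < P.b * 2^e * 2^p.2 := h2
      _ = P.b * 2^p.2 * 2^e := by ring

variable (μ : Measure Cantor) [IsProbabilityMeasure μ]

def SplitSpec (n : ℕ) (P Q R : Pc) : Prop :=
  ∃ e j,
    Q = ⟨P.d + e, P.a * 2^e, j⟩ ∧ R = ⟨P.d + e, j, P.b * 2^e⟩ ∧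
    P.a * 2^e < j ∧ j < P.b * 2^e ∧
    ms μ (pset Q) ≤ Kc n ∧ ms μ (pset R) ≤ Kc n ∧
    (Qin (prio P) Q → ms μ (pset Q) ≤ ms μ (pset P) - Kc n + dlc n) ∧
    (Qin (prio P) R → ms μ (pset R) ≤ ms μ (pset P) - Kc n + dlc n)

def Inv (n : ℕ) (P : Pc) : Prop := P.a < P.b ∧ P.b ≤ 2^P.d ∧ ms μ (pset P) ≤ Bc n

lemma split_ex (hc : ∀ y : Cantor, μ {y} = 0) (n : ℕ) (P : Pc) (hI : Inv μ n P) :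
    ∃ QR : Pc × Pc, SplitSpec μ n P QR.1 QR.2 := by
  classical
  obtain ⟨hab, hb2, hms⟩ := hI
  obtain ⟨D, hD⟩ := fine μ hc (dlc_pos n)
  set q := prio P with hqdef
  have hQin : Qin q P := prio_Qin hab
  set e := max D q.2 with hedef
  set d' := P.d + e with hd'def
  have hkd : q.2 ≤ d' := le_trans (le_max_right _ _) (Nat.le_add_left _ _)
  have hDd : D ≤ d' := le_trans (le_max_left _ _) (Nat.le_add_left _ _)
  have hpiece : ∀ t, ms μ (nset d' t (t+1)) ≤ dlc n := by
    intro t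
    have := hD (d' - D) t
    rwa [Nat.add_sub_cancel' hDd] at this
  set a' := P.a * 2^e with ha'def
  set b' := P.b * 2^e with hb'def
  set zpos := q.1 * 2^(d' - q.2) with hzdef
  have hzmul : zpos * 2^q.2 = (q.1 * 2^P.d) * 2^e := zpos_mul q.1 q.2 P.d e hkd
  have hz1 : a' < zpos := by
    apply cancel_pow_lt (e := q.2)
    rw [hzmul]
    calc a' * 2^q.2 = (P.a * 2^q.2) * 2^e := by rw [ha'def]; ring
      _ < (q.1 * 2^P.d) * 2^e := mul_pow_lt hQin.1
  have hz2 : zpos < b' := by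
    apply cancel_pow_lt (e := q.2)
    rw [hzmul]
    calc (q.1 * 2^P.d) * 2^e < (P.b * 2^q.2) * 2^e := mul_pow_lt hQin.2
      _ = b' * 2^q.2 := by rw [hb'def]; ring
  have hP' : pset P = nset d' a' b' := nset_refine P.d P.a P.b e
  have hsum : ms μ (pset P) = ms μ (nset d' a' zpos) + ms μ (nset d' zpos b') := by
    rw [hP']; exact ms_add μ (le_of_lt hz1) (le_of_lt hz2)
  set sL := ms μ (nset d' a' zpos) with hsL
  set sR := ms μ (nset d' zpos b') with hsR
  have hBc2Kc := Bc_lt_two_Kc n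
  have hdlcKc := dlc_le_Kc n
  have hdlc := dlc_pos n
  have h2KB := two_Kc_sub_Bc n
  by_cases hboth : sL ≤ Kc n ∧ sR ≤ Kc n
  · refine ⟨(⟨d', a', zpos⟩, ⟨d', zpos, b'⟩), e, zpos, rfl, rfl, hz1, hz2,
      hboth.1, hboth.2, ?_, ?_⟩
    · intro hqq
      exfalso
      have := hqq.2
      dsimp at this
      rw [hzmul] at this
      have : q.1 * 2^P.d * 2^e < q.1 * 2^P.d * 2^e := by
        calc q.1 * 2^P.d * 2^e = q.1 * 2^(P.d + e) := by rw [pow_add]; ring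
          _ < q.1 * 2^P.d * 2^e := this
      exact lt_irrefl _ this
    · intro hqq
      exfalso
      have := hqq.1
      dsimp at this
      rw [hzmul] at this
      have : q.1 * 2^P.d * 2^e < q.1 * 2^P.d * 2^e := by
        calc q.1 * 2^P.d * 2^e < q.1 * 2^(P.d+e) := this
          _ = q.1 * 2^P.d * 2^e := by rw [pow_add]; ring
      exact lt_irrefl _ this
  · rw [not_and_or, not_le, not_le] at hboth
    rcases hboth with hL | hR
    · -- heavy left
      have hz2' : a' + 2 ≤ zpos := by
        by_contra hcon
        push_neg at hcon
        have : zpos = a' + 1 := by omega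
        have : sL ≤ dlc n := by rw [hsL, this]; exact hpiece a'
        linarith
      set bnd := zpos - a' - 1 with hbnd
      have hbnd1 : 1 ≤ bnd := by omega
      set Pred := fun t => ms μ (nset d' a' (a'+t)) ≤ Kc n with hPred
      have hPred1 : Pred 1 := by
        show ms μ (nset d' a' (a'+1)) ≤ Kc n
        exact le_trans (hpiece a') hdlcKc
      set js := Nat.findGreatest Pred bnd with hjs
      have hj1 : 1 ≤ js := Nat.le_findGreatest hbnd1 hPred1
      have hjP : Pred js := Nat.findGreatest_spec hbnd1 hPred1
      have hjbnd : js ≤ bnd := Nat.findGreatest_le bnd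
      have hstep : ms μ (nset d' a' (a'+js+1)) ≤ ms μ (nset d' a' (a'+js)) + dlc n := by
        have hadd : ms μ (nset d' a' (a'+js+1))
            = ms μ (nset d' a' (a'+js)) + ms μ (nset d' (a'+js) (a'+js+1)) :=
          ms_add μ (by omega) (by omega)
        rw [hadd]
        have := hpiece (a'+js)
        linarith
      have hlow : Kc n - dlc n ≤ ms μ (nset d' a' (a'+js)) := by
        rcases eq_or_lt_of_le hjbnd with heq | hlt
        · have hz3 : a' + js + 1 = zpos := by omega
          rw [hz3] at hstep
          rw [hsL] at hL
          linarith
        · have hnP : ¬ Pred (js + 1) := Nat.findGreatest_is_greatest (n := bnd) (by omega) (by omega)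
          rw [hPred] at hnP
          have hnP' : Kc n < ms μ (nset d' a' (a'+js+1)) := not_le.1 hnP
          linarith
      set j := a' + js with hjdef
      have hjlt : j < zpos := by omega
      have hmsQ : ms μ (pset ⟨d', a', j⟩) ≤ Kc n := hjP
      have hsplit : ms μ (pset P) = ms μ (pset ⟨d', a', j⟩) + ms μ (pset ⟨d', j, b'⟩) := by
        rw [hP']; exact ms_add μ (by show a' ≤ j; omega) (by show j ≤ b'; omega)
      have hmsRdecay : ms μ (pset ⟨d', j, b'⟩) ≤ ms μ (pset P) - Kc n + dlc n := by
        have : Kc n - dlc n ≤ ms μ (pset ⟨d', a', j⟩) := hlow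
        linarith
      have hmsR : ms μ (pset ⟨d', j, b'⟩) ≤ Kc n := by
        have := hmsRdecay
        linarith
      have hja : a' < j := by omega
      have hjb : j < b' := by omega
      refine ⟨(⟨d', a', j⟩, ⟨d', j, b'⟩), e, j, rfl, rfl, hja, hjb,
        hmsQ, hmsR, ?_, fun _ => hmsRdecay⟩
      intro hqq
      exfalso
      have h2 := hqq.2
      dsimp at h2
      have : j * 2^q.2 < zpos * 2^q.2 := mul_pow_lt hjlt
      rw [hzmul] at this
      have hgt : q.1 * 2^(P.d + e) = q.1 * 2^P.d * 2^e := by rw [pow_add]; ring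
      rw [hgt] at h2
      exact lt_asymm this h2
    · -- heavy right
      have hz2' : zpos + 2 ≤ b' := by
        by_contra hcon
        push_neg at hcon
        have hz3 : b' = zpos + 1 := by omega
        have : sR ≤ dlc n := by rw [hsR, hz3]; exact hpiece zpos
        linarith
      set bnd := b' - zpos - 1 with hbnd
      have hbnd1 : 1 ≤ bnd := by omega
      set Pred := fun t => ms μ (nset d' (b'-t) b') ≤ Kc n with hPred
      have hPred1 : Pred 1 := by
        show ms μ (nset d' (b'-1) b') ≤ Kc n
        have : b' - 1 + 1 = b' := by omega
        calc ms μ (nset d' (b'-1) b') = ms μ (nset d' (b'-1) (b'-1+1)) := by rw [this]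
          _ ≤ dlc n := hpiece _
          _ ≤ Kc n := hdlcKc
      set js := Nat.findGreatest Pred bnd with hjs
      have hj1 : 1 ≤ js := Nat.le_findGreatest hbnd1 hPred1
      have hjP : Pred js := Nat.findGreatest_spec hbnd1 hPred1
      have hjbnd : js ≤ bnd := Nat.findGreatest_le bnd
      have hstep : ms μ (nset d' (b'-(js+1)) b') ≤ ms μ (nset d' (b'-js) b') + dlc n := by
        have hadd : ms μ (nset d' (b'-(js+1)) b')
            = ms μ (nset d' (b'-(js+1)) (b'-js)) + ms μ (nset d' (b'-js) b') :=
          ms_add μ (by omega) (by omega)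
        have hpc : ms μ (nset d' (b'-(js+1)) (b'-js)) ≤ dlc n := by
          have h4 : b' - js = (b'-(js+1)) + 1 := by omega
          rw [h4]
          exact hpiece _
        rw [hadd]
        linarith
      have hlow : Kc n - dlc n ≤ ms μ (nset d' (b'-js) b') := by
        rcases eq_or_lt_of_le hjbnd with heq | hlt
        · have hz3 : b' - (js+1) = zpos := by omega
          rw [hz3] at hstep
          rw [hsR] at hR
          linarith
        · have hnP : ¬ Pred (js + 1) := Nat.findGreatest_is_greatest (n := bnd) (by omega) (by omega)
          rw [hPred] at hnP
          have hnP' : Kc n < ms μ (nset d' (b'-(js+1)) b') := not_le.1 hnP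
          linarith
      set j := b' - js with hjdef
      have hjgt : zpos < j := by omega
      have hmsR' : ms μ (pset ⟨d', j, b'⟩) ≤ Kc n := hjP
      have hsplit : ms μ (pset P) = ms μ (pset ⟨d', a', j⟩) + ms μ (pset ⟨d', j, b'⟩) := by
        rw [hP']; exact ms_add μ (by show a' ≤ j; omega) (by show j ≤ b'; omega)
      have hmsQdecay : ms μ (pset ⟨d', a', j⟩) ≤ ms μ (pset P) - Kc n + dlc n := by
        have : Kc n - dlc n ≤ ms μ (pset ⟨d', j, b'⟩) := hlow
        linarith
      have hmsQ' : ms μ (pset ⟨d', a', j⟩) ≤ Kc n := by linarith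
      have hja : a' < j := by omega
      have hjb : j < b' := by omega
      refine ⟨(⟨d', a', j⟩, ⟨d', j, b'⟩), e, j, rfl, rfl, hja, hjb,
        hmsQ', hmsR', fun _ => hmsQdecay, ?_⟩
      intro hqq
      exfalso
      have h1 := hqq.1
      dsimp at h1
      have : zpos * 2^q.2 < j * 2^q.2 := mul_pow_lt hjgt
      rw [hzmul] at this
      have hgt : q.1 * 2^(P.d + e) = q.1 * 2^P.d * 2^e := by rw [pow_add]; ring
      rw [hgt] at h1
      exact lt_asymm this h1

/-! ### the tree of parts -/

noncomputable def split (n : ℕ) (P : Pc) : Pc × Pc :=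
  if h : ∃ QR : Pc × Pc, SplitSpec μ n P QR.1 QR.2 then Classical.choose h
  else (⟨P.d, P.a, P.b⟩, ⟨P.d, P.b, P.b⟩)

lemma split_spec (hc : ∀ y : Cantor, μ {y} = 0) (n : ℕ) (P : Pc) (hI : Inv μ n P) :
    SplitSpec μ n P (split μ n P).1 (split μ n P).2 := by
  rw [split, dif_pos (split_ex μ hc n P hI)]
  exact Classical.choose_spec (split_ex μ hc n P hI)

noncomputable def partAux : List Bool → Pc
  | [] => ⟨0, 0, 1⟩
  | b :: σ => if b then (split μ σ.length (partAux σ)).2 else (split μ σ.length (partAux σ)).1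

noncomputable def part (σ : List Bool) : Pc := partAux μ σ.reverse

lemma part_nil : part μ ([] : List Bool) = ⟨0, 0, 1⟩ := rfl

lemma pset_part_nil : pset (part μ []) = Set.univ := by
  rw [part_nil]; exact nset_univ

lemma part_append (σ : List Bool) (b : Bool) :
    part μ (σ ++ [b]) =
      if b then (split μ σ.length (part μ σ)).2 else (split μ σ.length (part μ σ)).1 := by
  show partAux μ ((σ ++ [b]).reverse) = _
  rw [List.reverse_append]
  show partAux μ (b :: σ.reverse) = _
  simp only [partAux, List.length_reverse]
  rfl

lemma part_inv (hc : ∀ y : Cantor, μ {y} = 0) :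
    ∀ σ : List Bool, Inv μ σ.length (part μ σ) := by
  intro σ
  induction σ using List.reverseRecOn with
  | nil =>
    rw [part_nil μ]
    refine ⟨by norm_num, by norm_num, ?_⟩
    show ms μ (pset ⟨0,0,1⟩) ≤ Bc 0
    rw [show pset ⟨0,0,1⟩ = Set.univ from nset_univ, ms_univ μ]
    exact one_le_Bc0
  | append_singleton σ b ih =>
    obtain ⟨e, j, hQ, hR, hj1, hj2, hQle, hRle, _, _⟩ := split_spec μ hc σ.length (part μ σ) ih
    rw [part_append μ σ b]
    have hlen : (σ ++ [b]).length = σ.length + 1 := by simp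
    rw [hlen]
    have hb2 : (part μ σ).b * 2^e ≤ 2^((part μ σ).d + e) := by
      rw [pow_add]
      exact Nat.mul_le_mul_right _ ih.2.1
    cases b
    · simp only [if_neg (by simp : ¬ (false = true))]
      refine ⟨?_, ?_, ?_⟩
      · rw [hQ]; exact hj1
      · rw [hQ]; exact le_trans (le_of_lt hj2) hb2
      · exact hQle
    · simp only [if_pos rfl]
      refine ⟨?_, ?_, ?_⟩
      · rw [hR]; exact hj2
      · rw [hR]; exact hb2
      · exact hRle

lemma part_union (hc : ∀ y : Cantor, μ {y} = 0) (σ : List Bool) :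
    pset (part μ σ) = pset (part μ (σ ++ [false])) ∪ pset (part μ (σ ++ [true])) := by
  obtain ⟨e, j, hQ, hR, hj1, hj2, _, _, _, _⟩ :=
    split_spec μ hc σ.length (part μ σ) (part_inv μ hc σ)
  rw [part_append μ σ false, part_append μ σ true]
  simp only [if_neg (by simp : ¬ (false = true)), if_pos rfl]
  rw [hQ, hR]
  show pset (part μ σ) = nset _ _ _ ∪ nset _ _ _
  rw [pset, nset_refine (part μ σ).d (part μ σ).a (part μ σ).b e]
  exact nset_union (le_of_lt hj1) (le_of_lt hj2)

lemma part_disjoint (hc : ∀ y : Cantor, μ {y} = 0) (σ : List Bool) :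
    Disjoint (pset (part μ (σ ++ [false]))) (pset (part μ (σ ++ [true]))) := by
  obtain ⟨e, j, hQ, hR, _, _, _, _, _, _⟩ :=
    split_spec μ hc σ.length (part μ σ) (part_inv μ hc σ)
  rw [part_append μ σ false, part_append μ σ true]
  simp only [if_neg (by simp : ¬ (false = true)), if_pos rfl]
  rw [hQ, hR]
  exact nset_disjoint

lemma part_subset (hc : ∀ y : Cantor, μ {y} = 0) (σ : List Bool) (b : Bool) :
    pset (part μ (σ ++ [b])) ⊆ pset (part μ σ) := by
  rw [part_union μ hc σ]
  cases b
  · exact Set.subset_union_left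
  · exact Set.subset_union_right

/-! ### the branch map and Φ -/

noncomputable def branch (x : Cantor) : ℕ → List Bool
  | 0 => []
  | n+1 => branch x n ++ [if x ∈ pset (part μ (branch x n ++ [true])) then true else false]

lemma branch_succ (x : Cantor) (n : ℕ) :
    branch μ x (n+1) = branch μ x n ++
      [if x ∈ pset (part μ (branch μ x n ++ [true])) then true else false] := rfl

lemma branch_length (x : Cantor) (n : ℕ) : (branch μ x n).length = n := by
  induction n with
  | zero => rfl
  | succ n ih => rw [branch_succ]; simp [ih]

lemma branch_mem (hc : ∀ y : Cantor, μ {y} = 0) (x : Cantor) (n : ℕ) :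
    x ∈ pset (part μ (branch μ x n)) := by
  induction n with
  | zero => rw [show branch μ x 0 = [] from rfl, pset_part_nil μ]; trivial
  | succ n ih =>
    rw [branch_succ]
    by_cases h : x ∈ pset (part μ (branch μ x n ++ [true]))
    · rwa [if_pos h]
    · rw [if_neg h]
      have := part_union μ hc (branch μ x n)
      rw [this] at ih
      rcases ih with h1 | h1
      · exact h1
      · exact absurd h1 h

lemma branch_unique (hc : ∀ y : Cantor, μ {y} = 0) : ∀ (σ : List Bool) (x : Cantor),
    x ∈ pset (part μ σ) → branch μ x σ.length = σ := by
  intro σ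
  induction σ using List.reverseRecOn with
  | nil => intro x _; rfl
  | append_singleton σ b ih =>
    intro x hx
    have hx' : x ∈ pset (part μ σ) := part_subset μ hc σ b hx
    have hσ : branch μ x σ.length = σ := ih x hx'
    have hlen : (σ ++ [b]).length = σ.length + 1 := by simp
    rw [hlen, branch_succ, hσ]
    congr 1
    cases b
    · have hnot : x ∉ pset (part μ (σ ++ [true])) :=
        Set.disjoint_left.1 (part_disjoint μ hc σ) hx
      rw [if_neg hnot]
    · rw [if_pos hx]

lemma mem_pset_iff_branch (hc : ∀ y : Cantor, μ {y} = 0) {σ : List Bool} {x : Cantor} :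
    x ∈ pset (part μ σ) ↔ branch μ x σ.length = σ := by
  constructor
  · exact branch_unique μ hc σ x
  · intro h
    have := branch_mem μ hc x σ.length
    rwa [h] at this

noncomputable def Phi (x : Cantor) : Cantor := fun n => (branch μ x (n+1)).getD n false

lemma seg_succ (y : Cantor) (n : ℕ) : seg y (n+1) = seg y n ++ [y n] := by
  rw [seg, List.ofFn_succ', List.concat_eq_append]
  simp [seg]

lemma seg_length (y : Cantor) (n : ℕ) : (seg y n).length = n := by simp [seg]

lemma seg_getD (y : Cantor) {i n : ℕ} (h : i < n) : (seg y n).getD i false = y i := by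
  rw [List.getD_eq_getElem?_getD]
  simp [seg, List.getElem?_ofFn, h]

lemma branch_succ_getD (x : Cantor) (n : ℕ) :
    branch μ x (n+1) = branch μ x n ++ [Phi μ x n] := by
  rw [branch_succ]
  congr 1
  have : Phi μ x n = (branch μ x (n+1)).getD n false := rfl
  rw [this, branch_succ, List.getD_append_right _ _ _ _ (le_of_eq (branch_length μ x n)),
    branch_length]
  simp

lemma seg_Phi (x : Cantor) (n : ℕ) : seg (Phi μ x) n = branch μ x n := by
  induction n with
  | zero => rfl
  | succ n ih => rw [seg_succ, ih, branch_succ_getD]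

lemma mem_cyl_iff {y : Cantor} {τ : List Bool} : y ∈ cyl τ ↔ seg y τ.length = τ := by
  constructor
  · intro h
    apply List.ext_getElem (by simp [seg])
    intro i h1 h2
    have h3 : i < τ.length := h2
    have := h i h3
    rw [List.getD_eq_getElem τ false h3] at this
    simp only [seg]
    rw [List.getElem_ofFn]
    exact this
  · intro h i hi
    conv_rhs => rw [← h]
    exact (seg_getD y hi).symm

lemma Phi_preimage (hc : ∀ y : Cantor, μ {y} = 0) (τ : List Bool) :
    Phi μ ⁻¹' (cyl τ) = pset (part μ τ) := by
  ext x
  rw [Set.mem_preimage, mem_cyl_iff, seg_Phi, mem_pset_iff_branch μ hc]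

lemma Phi_surj (hc : ∀ y : Cantor, μ {y} = 0) : Function.Surjective (Phi μ) := by
  intro y
  set V : ℕ → Set Cantor := fun n => pset (part μ (seg y n)) with hV
  have hsub : ∀ n, V (n+1) ⊆ V n := by
    intro n
    rw [hV]
    dsimp only
    rw [seg_succ]
    exact part_subset μ hc _ _
  have hne : ∀ n, (V n).Nonempty := by
    intro n
    obtain ⟨h1, h2, _⟩ := part_inv μ hc (seg y n)
    exact nset_nonempty h1 h2
  have hclosed : ∀ n, IsClosed (V n) := fun n => isClosed_nset _ _ _
  have hcompact : IsCompact (V 0) := (hclosed 0).isCompact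
  obtain ⟨x, hx⟩ := IsCompact.nonempty_iInter_of_sequence_nonempty_isCompact_isClosed
    V hsub hne hcompact hclosed
  refine ⟨x, ?_⟩
  have hbr : ∀ n, branch μ x n = seg y n := by
    intro n
    have hxV : x ∈ V n := Set.mem_iInter.1 hx n
    have := branch_unique μ hc (seg y n) x hxV
    rwa [seg_length] at this
  funext i
  have h1 : Phi μ x i = (branch μ x (i+1)).getD i false := rfl
  rw [h1, hbr (i+1), seg_getD y (by omega)]

/-! ### separation of distinct points by dyadic rationals -/

def SEP (x x' : Cantor) (c k : ℕ) : Prop :=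
  ∀ D, k ≤ D → val D x < c * 2^(D-k) ∧ c * 2^(D-k) ≤ val D x'

lemma agree_lt {x x' : Cantor} {i : ℕ} (hagree : ∀ t, t < i → x t = x' t)
    (hx : x i = false) (hx' : x' i = true) :
    ∀ j, i + 1 ≤ j → val j x + 1 ≤ val j x' := by
  intro j hj
  induction j, hj using Nat.le_induction with
  | base =>
    simp only [val, hx, hx']
    rw [val_congr (fun t ht => hagree t ht)]
    simp
  | succ j hij ih =>
    simp only [val]
    have hb : (if x j then 1 else 0) ≤ 1 := by split <;> omega
    have hb' : (0:ℕ) ≤ (if x' j then 1 else 0) := by positivity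
    omega

lemma sep_exists {x x' : Cantor} {i : ℕ} (hagree : ∀ t, t < i → x t = x' t)
    (hx : x i = false) (hx' : x' i = true) :
    ∃ c k, SEP x x' c k := by
  by_cases h1 : ∃ j, i < j ∧ x j = false
  · obtain ⟨j, hij, hj⟩ := h1
    refine ⟨val (j+1) x + 1, j+1, ?_⟩
    intro D hD
    obtain ⟨ee, rfl⟩ := Nat.exists_eq_add_of_le hD
    have harith : j + 1 + ee - (j+1) = ee := by omega
    rw [harith]
    constructor
    · have := val_upper (j+1) ee x
      calc val (j+1+ee) x < 2^ee * (val (j+1) x + 1) := this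
        _ = (val (j+1) x + 1) * 2^ee := by ring
    · have hkey : val (j+1) x + 2 ≤ val (j+1) x' := by
        have h2 : val j x + 1 ≤ val j x' := agree_lt hagree hx hx' j (by omega)
        simp only [val, hj, Bool.false_eq_true, if_false]
        have hb' : (0:ℕ) ≤ (if x' j = true then 1 else 0) := Nat.zero_le _
        omega
      calc (val (j+1) x + 1) * 2^ee ≤ val (j+1) x' * 2^ee := by
            exact Nat.mul_le_mul_right _ (by omega)
        _ = 2^ee * val (j+1) x' := by ring
        _ ≤ val (j+1+ee) x' := val_lower (j+1) ee x'
  · by_cases h2 : ∃ j, i < j ∧ x' j = true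
    · obtain ⟨j, hij, hj⟩ := h2
      refine ⟨val (j+1) x', j+1, ?_⟩
      intro D hD
      obtain ⟨ee, rfl⟩ := Nat.exists_eq_add_of_le hD
      have harith : j + 1 + ee - (j+1) = ee := by omega
      rw [harith]
      constructor
      · have hkey : val (j+1) x + 1 ≤ val (j+1) x' := by
          have h3 : val j x + 1 ≤ val j x' := agree_lt hagree hx hx' j (by omega)
          simp only [val, hj, if_true]
          have hb : (if x j = true then 1 else 0) ≤ 1 := by split <;> omega
          omega
        calc val (j+1+ee) x < 2^ee * (val (j+1) x + 1) := val_upper (j+1) ee x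
          _ ≤ 2^ee * val (j+1) x' := Nat.mul_le_mul_left _ hkey
          _ = val (j+1) x' * 2^ee := by ring
      · calc val (j+1) x' * 2^ee = 2^ee * val (j+1) x' := by ring
          _ ≤ val (j+1+ee) x' := val_lower (j+1) ee x'
    · push_neg at h1 h2
      refine ⟨val (i+1) x + 1, i+1, ?_⟩
      intro D hD
      obtain ⟨ee, rfl⟩ := Nat.exists_eq_add_of_le hD
      have harith : i + 1 + ee - (i+1) = ee := by omega
      rw [harith]
      constructor
      · calc val (i+1+ee) x < 2^ee * (val (i+1) x + 1) := val_upper (i+1) ee x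
          _ = (val (i+1) x + 1) * 2^ee := by ring
      · have hval : val (i+1+ee) x' = 2^ee * val (i+1) x' := by
          apply val_allfalse
          intro t ht1 ht2
          have : x' t ≠ true := h2 t (by omega)
          simpa using this
        have hkey : val (i+1) x' = val (i+1) x + 1 := by
          simp only [val, hx, hx']
          rw [val_congr (fun t ht => (hagree t ht).symm)]
          simp
        rw [hval, hkey]
        calc (val (i+1) x + 1) * 2^ee = 2^ee * (val (i+1) x + 1) := by ring
          _ ≤ _ := le_refl _

lemma SEP_Qin {x x' : Cantor} {c k : ℕ} (h : SEP x x' c k) {P : Pc}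
    (hx : x ∈ pset P) (hx' : x' ∈ pset P) : Qin (c, k) P := by
  obtain ⟨h1, h2⟩ := h (P.d + k) (by omega)
  have harith : P.d + k - k = P.d := by omega
  rw [harith] at h1 h2
  obtain ⟨ha, hb⟩ := hx
  obtain ⟨ha', hb'⟩ := hx'
  constructor
  · show P.a * 2^k < c * 2^P.d
    calc P.a * 2^k ≤ val P.d x * 2^k := Nat.mul_le_mul_right _ ha
      _ = 2^k * val P.d x := by ring
      _ ≤ val (P.d + k) x := val_lower P.d k x
      _ < c * 2^P.d := h1
  · show c * 2^P.d < P.b * 2^k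
    calc c * 2^P.d ≤ val (P.d + k) x' := h2
      _ < 2^k * (val P.d x' + 1) := val_upper P.d k x'
      _ ≤ 2^k * P.b := Nat.mul_le_mul_left _ (by omega)
      _ = P.b * 2^k := by ring

/-! ### injectivity -/

lemma Qin_anti_branch (hc : ∀ y : Cantor, μ {y} = 0) (p : ℕ × ℕ) (σ : List Bool) (b : Bool)
    (h : Qin p (part μ (σ ++ [b]))) : Qin p (part μ σ) := by
  obtain ⟨e, j, hQ, hR, hj1, hj2, _, _, _, _⟩ :=
    split_spec μ hc σ.length (part μ σ) (part_inv μ hc σ)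
  rw [part_append μ σ b] at h
  cases b
  · rw [if_neg (by simp : ¬ (false = true)), hQ] at h
    exact Qin_anti_left (le_of_lt hj2) h
  · rw [if_pos rfl, hR] at h
    exact Qin_anti_right (le_of_lt hj1) h

lemma part_decay (hc : ∀ y : Cantor, μ {y} = 0) (σ : List Bool) (b : Bool)
    (hq : Qin (prio (part μ σ)) (part μ (σ ++ [b]))) :
    ms μ (pset (part μ (σ ++ [b]))) ≤ ms μ (pset (part μ σ)) - Kc σ.length + dlc σ.length := by
  obtain ⟨e, j, hQ, hR, hj1, hj2, _, _, hdQ, hdR⟩ :=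
    split_spec μ hc σ.length (part μ σ) (part_inv μ hc σ)
  rw [part_append μ σ b] at hq ⊢
  cases b
  · rw [if_neg (by simp : ¬ (false = true))] at hq ⊢
    exact hdQ hq
  · rw [if_pos rfl] at hq ⊢
    exact hdR hq

lemma Phi_inj (hc : ∀ y : Cantor, μ {y} = 0) : Function.Injective (Phi μ) := by
  intro x x' hPhi
  by_contra hne
  set y := Phi μ x with hy
  -- both points lie in all the parts along branch y
  have hmem : ∀ n, x ∈ pset (part μ (seg y n)) ∧ x' ∈ pset (part μ (seg y n)) := by
    intro n
    constructor
    · have := branch_mem μ hc x n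
      rwa [← seg_Phi, ← hy] at this
    · have := branch_mem μ hc x' n
      rwa [← seg_Phi, ← hPhi] at this
  -- find a separating dyadic rational
  have hdiff : ∃ i, x i ≠ x' i := by
    by_contra hcon
    push_neg at hcon
    exact hne (funext hcon)
  have hsep : ∃ c k, SEP x x' c k ∨ SEP x' x c k := by
    set i := Nat.find hdiff with hi
    have hagree : ∀ t, t < i → x t = x' t := by
      intro t ht
      have := Nat.find_min hdiff ht
      simpa using this
    have hii : x i ≠ x' i := Nat.find_spec hdiff
    rcases Bool.dichotomy (x i) with hxi | hxi <;> rcases Bool.dichotomy (x' i) with hxi' | hxi'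
    · exact absurd (hxi.trans hxi'.symm) hii
    · obtain ⟨c, k, h⟩ := sep_exists hagree hxi hxi'
      exact ⟨c, k, Or.inl h⟩
    · obtain ⟨c, k, h⟩ := sep_exists (fun t ht => (hagree t ht).symm) hxi' hxi
      exact ⟨c, k, Or.inr h⟩
    · exact absurd (hxi.trans hxi'.symm) hii
  obtain ⟨c, k, hck⟩ := hsep
  have hQall : ∀ n, Qin (c, k) (part μ (seg y n)) := by
    intro n
    obtain ⟨hm1, hm2⟩ := hmem n
    rcases hck with h | h
    · exact SEP_Qin h hm1 hm2
    · exact SEP_Qin h hm2 hm1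
  -- priority argument
  obtain ⟨m1, hm1⟩ := enm_surj (c, k)
  have hex : ∃ m, ∀ n, Qin (enm m) (part μ (seg y n)) := ⟨m1, by rw [hm1]; exact hQall⟩
  set m0 := Nat.find hex with hm0
  have hq0 : ∀ n, Qin (enm m0) (part μ (seg y n)) := Nat.find_spec hex
  -- for each m < m0, failure happens from some point on
  have hmono : ∀ p n, ¬ Qin p (part μ (seg y n)) → ∀ n', n ≤ n' → ¬ Qin p (part μ (seg y n')) := by
    intro p n hn n' hn'
    induction n', hn' using Nat.le_induction with
    | base => exact hn
    | succ n' hnn ih =>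
      intro hq
      apply ih
      have : Qin p (part μ (seg y n' ++ [y n'])) := by rwa [← seg_succ]
      exact Qin_anti_branch μ hc p (seg y n') (y n') this
  set N0 := (Finset.range m0).sup
    (fun m => if h : ∃ nn, ¬ Qin (enm m) (part μ (seg y nn)) then Nat.find h else 0) with hN0
  have hprio : ∀ n, N0 ≤ n → prio (part μ (seg y n)) = enm m0 := by
    intro n hn
    apply prio_eq (hq0 n)
    intro m hm
    have hnot : ¬ ∀ nn, Qin (enm m) (part μ (seg y nn)) := Nat.find_min hex hm
    push_neg at hnot
    have hfind : Nat.find hnot ≤ N0 := by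
      have hle := Finset.le_sup (f := fun m =>
          if h : ∃ nn, ¬ Qin (enm m) (part μ (seg y nn)) then Nat.find h else 0)
        (Finset.mem_range.2 hm)
      have hle' : (if h : ∃ nn, ¬ Qin (enm m) (part μ (seg y nn)) then Nat.find h else 0) ≤ N0 :=
        hle
      rwa [dif_pos hnot] at hle'
    exact hmono _ _ (Nat.find_spec hnot) n (le_trans hfind hn)
  have hdecay : ∀ n, N0 ≤ n →
      ms μ (pset (part μ (seg y (n+1)))) ≤ ms μ (pset (part μ (seg y n))) - Kc n + dlc n := by
    intro n hn
    have h1 : Qin (prio (part μ (seg y n))) (part μ (seg y n ++ [y n])) := by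
      rw [hprio n hn, ← seg_succ]
      exact hq0 (n+1)
    have := part_decay μ hc (seg y n) (y n) h1
    rwa [← seg_succ, seg_length] at this
  -- numeric contradiction
  set msn : ℕ → ℝ := fun n => ms μ (pset (part μ (seg y n))) with hmsn
  have hmsB : ∀ n, msn n ≤ Bc n := by
    intro n
    have := (part_inv μ hc (seg y n)).2.2
    rwa [seg_length] at this
  have hms0 : ∀ n, 0 ≤ msn n := fun n => ms_nonneg μ _
  set Ac : ℝ := (4:ℝ)⁻¹^(N0+1) with hAc
  have hAcpos : 0 < Ac := by rw [hAc]; positivity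
  have hgrow : ∀ kk : ℕ, Ac * (2^kk + 4⁻¹^kk) ≤ 2 - 2^(N0+kk) * msn (N0+kk) := by
    intro kk
    induction kk with
    | zero =>
      have h1 : 2^N0 * msn N0 ≤ 2^N0 * Bc N0 :=
        mul_le_mul_of_nonneg_left (hmsB N0) (by positivity)
      have h2 : (2:ℝ)^N0 * Bc N0 = 2 * (1 - 4⁻¹^(N0+1)) := by
        rw [Bc]
        rw [show (2:ℝ)^N0 * ((1 - 4⁻¹^(N0+1)) * (2 * 2⁻¹^N0))
            = (2:ℝ)^N0 * 2⁻¹^N0 * ((1 - 4⁻¹^(N0+1)) * 2) from by ring, two_pow_halfpow]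
        ring
      simp only [pow_zero, add_zero]
      rw [hAc]
      nlinarith [h1, h2]
    | succ kk ih =>
      set n := N0 + kk with hn
      have hd := hdecay n (by omega)
      have harith : N0 + (kk+1) = n + 1 := by omega
      rw [harith]
      have hKc : (2:ℝ)^(n+1) * Kc n = 2 * (1 - 4⁻¹^(n+2)) := by
        rw [Kc_eq]
        rw [show (2:ℝ)^(n+1) * ((1 - 4⁻¹^(n+2)) * 2⁻¹^n)
            = (2:ℝ)^n * 2⁻¹^n * ((1 - 4⁻¹^(n+2)) * 2) from by ring, two_pow_halfpow]
        ring
      have hdl : (2:ℝ)^(n+1) * dlc n = 2 * 4⁻¹^(n+2) := by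
        rw [dlc]
        rw [show (2:ℝ)^(n+1) * (4⁻¹^(n+2) * 2⁻¹^n)
            = (2:ℝ)^n * 2⁻¹^n * (4⁻¹^(n+2) * 2) from by ring, two_pow_halfpow]
        ring
      have hstep : 2 - 2^(n+1) * msn (n+1)
          ≥ 2 * (2 - 2^n * msn n) - 4 * 4⁻¹^(n+2) := by
        have h3 : (2:ℝ)^(n+1) * msn (n+1) ≤ 2^(n+1) * (msn n - Kc n + dlc n) :=
          mul_le_mul_of_nonneg_left hd (by positivity)
        have h4 : (2:ℝ)^(n+1) * (msn n - Kc n + dlc n)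
            = 2 * (2^n * msn n) - 2^(n+1) * Kc n + 2^(n+1) * dlc n := by ring
        rw [h4, hKc, hdl] at h3
        linarith
      have hpow : (4:ℝ) * 4⁻¹^(n+2) = Ac * 4⁻¹^kk := by
        rw [hAc, hn]
        rw [show N0 + kk + 2 = (N0 + 1) + (kk + 1) from by omega, pow_add]
        rw [pow_succ]
        ring
      have : Ac * (2^kk + 4⁻¹^kk) ≤ 2 - 2^n * msn n := ih
      have hfin : 2 * (Ac * (2^kk + 4⁻¹^kk)) - Ac * 4⁻¹^kk ≤ 2 - 2^(n+1) * msn (n+1) := by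
        rw [← hpow] at *
        nlinarith [hstep, this]
      calc Ac * (2^(kk+1) + 4⁻¹^(kk+1))
          ≤ 2 * (Ac * (2^kk + 4⁻¹^kk)) - Ac * 4⁻¹^kk := by
            have h5 : (0:ℝ) < 4⁻¹^kk := by positivity
            have h7 : (0:ℝ) < Ac * 4⁻¹^kk := mul_pos hAcpos h5
            have h8 : (2:ℝ)^(kk+1) = 2 * 2^kk := by rw [pow_succ]; ring
            have h6 : (4:ℝ)⁻¹^(kk+1) = 4⁻¹^kk * 4⁻¹ := pow_succ _ _
            rw [h6, h8]
            nlinarith [h7]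
        _ ≤ 2 - 2^(n+1) * msn (n+1) := hfin
  -- get the contradiction
  obtain ⟨kk, hkk⟩ := pow_unbounded_of_one_lt (2 / Ac) (by norm_num : (1:ℝ) < 2)
  have h1 := hgrow kk
  have h2 : 2 - 2^(N0+kk) * msn (N0+kk) ≤ 2 := by
    have := hms0 (N0+kk)
    nlinarith [pow_pos (by norm_num : (0:ℝ) < 2) (N0+kk)]
  have h3 : (2:ℝ) < Ac * 2^kk := by
    rw [div_lt_iff₀ hAcpos] at hkk
    linarith
  have h4 : (0:ℝ) < 4⁻¹^kk := by positivity
  nlinarith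

/-! ### measurability and continuity of Φ -/

lemma Phi_coord_preimage (hc : ∀ y : Cantor, μ {y} = 0) (n : ℕ) (b : Bool) :
    (fun x => Phi μ x n) ⁻¹' {b}
      = ⋃ (σ : List Bool) (_ : σ.length = n+1 ∧ σ.getD n false = b), pset (part μ σ) := by
  ext x
  simp only [Set.mem_preimage, Set.mem_singleton_iff, Set.mem_iUnion]
  constructor
  · intro h
    refine ⟨branch μ x (n+1), ⟨branch_length μ x (n+1), ?_⟩, branch_mem μ hc x (n+1)⟩
    rw [← h]; rfl
  · rintro ⟨σ, ⟨hlen, hgd⟩, hx⟩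
    have hbr := branch_unique μ hc σ x hx
    rw [hlen] at hbr
    show (branch μ x (n+1)).getD n false = b
    rw [hbr, hgd]

lemma Phi_measurable (hc : ∀ y : Cantor, μ {y} = 0) : Measurable (Phi μ) := by
  rw [measurable_pi_iff]
  intro n
  apply measurable_to_countable'
  intro b
  rw [Phi_coord_preimage μ hc n b]
  exact MeasurableSet.iUnion (fun σ => MeasurableSet.iUnion (fun _ => measurableSet_nset _ _ _))

lemma Phi_continuous (hc : ∀ y : Cantor, μ {y} = 0) : Continuous (Phi μ) := by
  apply continuous_pi
  intro n
  rw [continuous_discrete_rng]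
  intro b
  rw [Phi_coord_preimage μ hc n b]
  exact isOpen_iUnion (fun σ => isOpen_iUnion (fun _ => isOpen_nset _ _ _))

lemma measurableSet_cyl (τ : List Bool) : MeasurableSet (cyl τ) := by
  have h : cyl τ = ⋂ (i : ℕ) (_ : i < τ.length), (fun y : Cantor => y i) ⁻¹' {τ.getD i false} := by
    ext y; simp [cyl]
  rw [h]
  exact MeasurableSet.iInter (fun i => MeasurableSet.iInter
    (fun _ => (measurable_pi_apply i) (measurableSet_singleton _)))

/-! ### the monotone map φ -/

def extC (σ : List Bool) : Cantor := fun i => σ.getD i false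

noncomputable def lg (σ : List Bool) : ℕ :=
  Nat.findGreatest (fun m => cyl σ ⊆ pset (part μ (seg (Phi μ (extC σ)) m))) σ.length

noncomputable def phiL (σ : List Bool) : List Bool := seg (Phi μ (extC σ)) (lg μ σ)

lemma extC_mem (σ : List Bool) : extC σ ∈ cyl σ := fun _ _ => rfl

lemma phiL_length (σ : List Bool) : (phiL μ σ).length = lg μ σ := seg_length _ _

lemma lg_le (σ : List Bool) : lg μ σ ≤ σ.length := by
  unfold lg; exact Nat.findGreatest_le σ.length

lemma cyl_sub_phiL (hc : ∀ y : Cantor, μ {y} = 0) (σ : List Bool) :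
    cyl σ ⊆ pset (part μ (phiL μ σ)) := by
  have h0 : cyl σ ⊆ pset (part μ (seg (Phi μ (extC σ)) 0)) := by
    rw [show seg (Phi μ (extC σ)) 0 = [] from rfl, pset_part_nil μ]
    exact fun _ _ => trivial
  unfold phiL lg
  exact Nat.findGreatest_spec
    (P := fun m => cyl σ ⊆ pset (part μ (seg (Phi μ (extC σ)) m))) (Nat.zero_le σ.length) h0

lemma cyl_mono {σ τ : List Bool} (h : σ <+: τ) : cyl τ ⊆ cyl σ := by
  intro y hy i hi
  obtain ⟨t, rfl⟩ := h
  rw [← List.getD_append σ t false i hi]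
  exact hy i (by simp; omega)

lemma mem_cyl_seg (x : Cantor) (n : ℕ) : x ∈ cyl (seg x n) := by
  intro i hi
  rw [seg_length] at hi
  exact (seg_getD x hi).symm

lemma seg_Phi_eq_of_mem (hc : ∀ y : Cantor, μ {y} = 0) {x : Cantor} {σ : List Bool} {m : ℕ}
    (h : x ∈ pset (part μ σ)) (hlen : σ.length = m) : seg (Phi μ x) m = σ := by
  subst hlen
  rw [seg_Phi]
  exact branch_unique μ hc σ x h

lemma seg_prefix (y : Cantor) {m n : ℕ} (h : m ≤ n) : seg y m <+: seg y n := by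
  induction n with
  | zero =>
    have : m = 0 := by omega
    subst this
    exact List.prefix_rfl
  | succ n ih =>
    rcases eq_or_lt_of_le h with heq | hlt
    · subst heq; exact List.prefix_rfl
    · have h2 : m ≤ n := by omega
      refine (ih h2).trans ?_
      rw [seg_succ]
      exact List.prefix_append _ _

lemma phiL_prefix (hc : ∀ y : Cantor, μ {y} = 0) {σ τ : List Bool} (h : σ <+: τ) :
    phiL μ σ <+: phiL μ τ := by
  have hsubcyl : cyl τ ⊆ cyl σ := cyl_mono h
  have hmem : extC τ ∈ pset (part μ (phiL μ σ)) := cyl_sub_phiL μ hc σ (hsubcyl (extC_mem τ))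
  have hstep1 : seg (Phi μ (extC τ)) (lg μ σ) = phiL μ σ :=
    seg_Phi_eq_of_mem μ hc hmem (phiL_length μ σ)
  have hlgle : lg μ σ ≤ lg μ τ := by
    apply Nat.le_findGreatest (le_trans (lg_le μ σ) h.length_le)
    show cyl τ ⊆ pset (part μ (seg (Phi μ (extC τ)) (lg μ σ)))
    rw [hstep1]
    exact subset_trans hsubcyl (cyl_sub_phiL μ hc σ)
  rw [← hstep1]
  exact seg_prefix _ hlgle

lemma Phi_mem_cyl (hc : ∀ y : Cantor, μ {y} = 0) (x : Cantor) (n : ℕ) :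
    Phi μ x ∈ cyl (phiL μ (seg x n)) := by
  have hx : x ∈ cyl (seg x n) := mem_cyl_seg x n
  have hmem : x ∈ pset (part μ (phiL μ (seg x n))) := cyl_sub_phiL μ hc _ hx
  rw [mem_cyl_iff]
  exact seg_Phi_eq_of_mem μ hc hmem rfl

lemma phiL_unbounded (hc : ∀ y : Cantor, μ {y} = 0) (x : Cantor) (m : ℕ) :
    ∃ n, m ≤ (phiL μ (seg x n)).length := by
  set y := Phi μ x with hy
  set d0 := (part μ (seg y m)).d with hd0
  refine ⟨max m d0, ?_⟩
  rw [phiL_length]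
  have hxin : x ∈ pset (part μ (seg y m)) := by
    have := branch_mem μ hc x m
    rwa [← seg_Phi] at this
  have hsub : cyl (seg x (max m d0)) ⊆ pset (part μ (seg y m)) := by
    intro z hz
    have hagree : val d0 z = val d0 x := by
      apply val_congr
      intro i hi
      have hi2 : i < (seg x (max m d0)).length := by rw [seg_length]; omega
      have := hz i hi2
      rw [seg_getD x (by omega : i < max m d0)] at this
      exact this
    obtain ⟨h1, h2⟩ := hxin
    exact ⟨by rwa [hagree], by rwa [hagree]⟩
  apply Nat.le_findGreatest (by rw [seg_length]; exact le_max_left m d0)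
  show cyl (seg x (max m d0)) ⊆ pset (part μ (seg (Phi μ (extC (seg x (max m d0)))) m))
  have hextmem : extC (seg x (max m d0)) ∈ pset (part μ (seg y m)) := hsub (extC_mem _)
  have hseg : seg (Phi μ (extC (seg x (max m d0)))) m = seg y m :=
    seg_Phi_eq_of_mem μ hc hextmem (seg_length y m)
  rw [hseg]
  exact hsub

end C15


open C15 in
theorem stmt_15 (μ : Measure Cantor) [IsProbabilityMeasure μ]
    (hcont : ∀ y : Cantor, μ {y} = 0)
    (hpos : ∀ σ : List Bool, 0 < μ (cyl σ)) :
    ∃ Φ : Cantor ≃ₜ Cantor, ∃ φ : List Bool → List Bool,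
      (∀ σ τ : List Bool, σ <+: τ → φ σ <+: φ τ) ∧
      (∀ x : Cantor, ∀ n : ℕ, Φ x ∈ cyl (φ (seg x n))) ∧
      (∀ x : Cantor, ∀ m : ℕ, ∃ n : ℕ, m ≤ (φ (seg x n)).length) ∧
      (∀ τ : List Bool,
        |(μ.map Φ (cyl τ)).toReal - (2:ℝ)⁻¹ ^ τ.length| ≤ (2:ℝ)⁻¹ ^ τ.length) := by
  classical
  have hc := hcont
  have hbij : Function.Bijective (Phi μ) := ⟨Phi_inj μ hc, Phi_surj μ hc⟩
  set E : Cantor ≃ Cantor := Equiv.ofBijective (Phi μ) hbij with hE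
  have hEc : Continuous ⇑E := Phi_continuous μ hc
  set H : Cantor ≃ₜ Cantor := Continuous.homeoOfEquivCompactToT2 (f := E) hEc with hH
  have hHcoe : ⇑H = Phi μ := rfl
  refine ⟨H, phiL μ, fun σ τ h => phiL_prefix μ hc h, ?_, fun x m => phiL_unbounded μ hc x m, ?_⟩
  · intro x n
    have := Phi_mem_cyl μ hc x n
    rwa [← hHcoe] at this
  · intro τ
    have hmap : μ.map (⇑H) (cyl τ) = μ (pset (part μ τ)) := by
      rw [Measure.map_apply (by rw [hHcoe]; exact Phi_measurable μ hc) (measurableSet_cyl τ)]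
      rw [hHcoe, Phi_preimage μ hc]
    rw [hmap]
    have hms : (μ (pset (part μ τ))).toReal = ms μ (pset (part μ τ)) := rfl
    rw [hms]
    have h1 : ms μ (pset (part μ τ)) ≤ Bc τ.length := (part_inv μ hc τ).2.2
    have h2 := Bc_le τ.length
    have h0 : 0 ≤ ms μ (pset (part μ τ)) := ms_nonneg μ _
    rw [abs_le]
    constructor <;> [linarith; linarith]
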